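/- Let M < ∞ and let (u_m) be a sequence of differentiable functions ℝ → ℝ such that for all m: ∫_ℝ u_m(x)² dx ≤ 1, ∫_ℝ (u_m'(x))² dx ≤ M, and C[u_m²] ≤ M. Then there exist a strictly increasing map φ : ℕ → ℕ and a square-integrable function u : ℝ → ℝ such that ‖u_{φ(k)} − u‖_{L²(ℝ)} → 0 as k → ∞. (That is, sets bounded in the ℬ-norm ‖u‖_{H¹} + C[u²]^{1/4} are relatively compact in L²(ℝ).) -/

import Mathlib

open MeasureTheory ENNReal Filter

/-- `C[f] = ∬_{xy>0} min(|x|,|y|) f(x) f(y) dx dy`, as an integral in `[0,∞]`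
(applied below only to nonnegative `f`). -/
noncomputable def Clint (f : ℝ → ℝ) : ℝ≥0∞ :=
  ∫⁻ p in {p : ℝ × ℝ | 0 < p.1 * p.2},
    ENNReal.ofReal (min (|p.1|) (|p.2|) * f p.1 * f p.2)

/-- Sets bounded in the ℬ-norm (`L²` norm, kinetic energy and `C[u²]`
all bounded) are relatively compact in `L²(ℝ)`: any such sequence has a subsequence
converging strongly in `L²` to some square-integrable `u`. -/

lemma sq_ofReal (r : ℝ) : ENNReal.ofReal |r| ^ (2:ℝ) = ENNReal.ofReal (r^2) := by
  rw [ENNReal.ofReal_rpow_of_nonneg (abs_nonneg r) (by norm_num)]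
  congr 1
  rw [Real.rpow_two, sq_abs]

lemma nnnorm_sq_ofReal (r : ℝ) : (‖r‖₊ : ENNReal) ^ (2:ℝ) = ENNReal.ofReal (r^2) := by
  rw [← enorm_eq_nnnorm, Real.enorm_eq_ofReal_abs, sq_ofReal]

/-- Key integral bound: `∫_{Ioc a b} |deriv f| ≤ √(max M 0) √(b-a)` in `ℝ≥0∞`. -/
lemma deriv_L1_bound {M : ℝ} (f : ℝ → ℝ)
    (hk : (∫⁻ x : ℝ, ENNReal.ofReal (deriv f x ^ 2)) ≤ ENNReal.ofReal M)
    (a b : ℝ) (hab : a ≤ b) :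
    (∫⁻ x in Set.Ioc a b, ENNReal.ofReal |deriv f x|) ≤
      ENNReal.ofReal (Real.sqrt (max M 0) * Real.sqrt (b - a)) := by
  set g := deriv f with hg
  have hgm : Measurable g := measurable_deriv f
  have hM' : (∫⁻ x : ℝ, ENNReal.ofReal (g x ^ 2)) ≤ ENNReal.ofReal (max M 0) :=
    hk.trans (ENNReal.ofReal_le_ofReal (le_max_left _ _))
  have conj : Real.HolderConjugate 2 2 := ⟨by norm_num, by norm_num, by norm_num⟩
  have h1 := ENNReal.lintegral_mul_le_Lp_mul_Lq (volume.restrict (Set.Ioc a b)) conj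
      (f := fun x => ENNReal.ofReal |g x|) (g := fun _ => (1:ENNReal))
      ((hgm.abs.ennreal_ofReal).aemeasurable) aemeasurable_const
  simp only [Pi.mul_apply, mul_one, ENNReal.one_rpow] at h1
  have h2 : (∫⁻ x in Set.Ioc a b, (ENNReal.ofReal |g x|) ^ (2:ℝ)) ≤ ENNReal.ofReal (max M 0) := by
    calc (∫⁻ x in Set.Ioc a b, (ENNReal.ofReal |g x|) ^ (2:ℝ))
        = ∫⁻ x in Set.Ioc a b, ENNReal.ofReal (g x ^ 2) := by
          simp only [sq_ofReal]
      _ ≤ ∫⁻ x, ENNReal.ofReal (g x ^ 2) := setLIntegral_le_lintegral _ _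
      _ ≤ _ := hM'
  have h3 : (∫⁻ _x in Set.Ioc a b, (1:ENNReal)) = ENNReal.ofReal (b - a) := by
    rw [setLIntegral_const, one_mul, Real.volume_Ioc]
  calc (∫⁻ x in Set.Ioc a b, ENNReal.ofReal |g x|)
      ≤ (∫⁻ x in Set.Ioc a b, (ENNReal.ofReal |g x|) ^ (2:ℝ)) ^ (1/(2:ℝ)) *
        (∫⁻ _x in Set.Ioc a b, ((1:ENNReal))) ^ (1/(2:ℝ)) := h1
    _ ≤ (ENNReal.ofReal (max M 0)) ^ (1/(2:ℝ)) * (ENNReal.ofReal (b - a)) ^ (1/(2:ℝ)) := by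
        exact mul_le_mul' (ENNReal.rpow_le_rpow h2 (by norm_num))
          (ENNReal.rpow_le_rpow (le_of_eq h3) (by norm_num))
    _ = ENNReal.ofReal (Real.sqrt (max M 0) * Real.sqrt (b - a)) := by
        rw [ENNReal.ofReal_rpow_of_nonneg (le_max_right M 0) (by norm_num),
          ENNReal.ofReal_rpow_of_nonneg (by linarith) (by norm_num),
          ← ENNReal.ofReal_mul (by positivity), Real.sqrt_eq_rpow, Real.sqrt_eq_rpow]

/-- Hölder continuity from the kinetic energy bound. -/
lemma holder_bound {M : ℝ} (f : ℝ → ℝ) (hf : Differentiable ℝ f)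
    (hk : (∫⁻ x : ℝ, ENNReal.ofReal (deriv f x ^ 2)) ≤ ENNReal.ofReal M)
    (a b : ℝ) :
    |f b - f a| ≤ Real.sqrt (max M 0) * Real.sqrt |b - a| := by
  have key : ∀ a b : ℝ, a ≤ b → |f b - f a| ≤ Real.sqrt (max M 0) * Real.sqrt (b - a) := by
    intro a b hab
    have hgm : Measurable (deriv f) := measurable_deriv f
    have hbd := deriv_L1_bound f hk a b hab
    have hInt : IntegrableOn (deriv f) (Set.Ioc a b) volume := by
      refine ⟨(hgm.aestronglyMeasurable).restrict, ?_⟩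
      rw [HasFiniteIntegral]
      calc (∫⁻ x in Set.Ioc a b, (‖deriv f x‖₊ : ENNReal))
          = ∫⁻ x in Set.Ioc a b, ENNReal.ofReal |deriv f x| := by
            simp only [← enorm_eq_nnnorm, Real.enorm_eq_ofReal_abs]
        _ ≤ ENNReal.ofReal (Real.sqrt (max M 0) * Real.sqrt (b - a)) := hbd
        _ < ⊤ := ENNReal.ofReal_lt_top
    have hIInt : IntervalIntegrable (deriv f) volume a b :=
      (intervalIntegrable_iff_integrableOn_Ioc_of_le hab).2 hInt
    have hFTC : ∫ y in a..b, deriv f y = f b - f a :=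
      intervalIntegral.integral_deriv_eq_sub (fun x _ => hf x) hIInt
    rw [← hFTC, intervalIntegral.integral_of_le hab]
    calc |∫ x in Set.Ioc a b, deriv f x|
        = ‖∫ x in Set.Ioc a b, deriv f x‖ := (Real.norm_eq_abs _).symm
      _ ≤ (∫⁻ x in Set.Ioc a b, ENNReal.ofReal ‖deriv f x‖).toReal :=
          norm_integral_le_lintegral_norm _
      _ ≤ (ENNReal.ofReal (Real.sqrt (max M 0) * Real.sqrt (b - a))).toReal := by
          apply ENNReal.toReal_mono ENNReal.ofReal_ne_top
          simpa only [Real.norm_eq_abs] using hbd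
      _ = Real.sqrt (max M 0) * Real.sqrt (b - a) := ENNReal.toReal_ofReal (by positivity)
  rcases le_total a b with hab | hab
  · rw [abs_of_nonneg (sub_nonneg.2 hab)]; exact key a b hab
  · rw [abs_sub_comm (f b), abs_of_nonpos (sub_nonpos.2 hab), neg_sub]
    exact key b a hab

/-- Uniform sup bound. -/
lemma sup_bound {M : ℝ} (f : ℝ → ℝ) (hf : Differentiable ℝ f)
    (hL2 : (∫⁻ x : ℝ, ENNReal.ofReal (f x ^ 2)) ≤ 1)
    (hk : (∫⁻ x : ℝ, ENNReal.ofReal (deriv f x ^ 2)) ≤ ENNReal.ofReal M)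
    (x : ℝ) : |f x| ≤ Real.sqrt 2 + Real.sqrt (max M 0) := by
  have hmeas : Measurable f := hf.continuous.measurable
  -- find y in Ioc x (x+1) with f y ^ 2 ≤ 2
  obtain ⟨y, hy, hy2⟩ : ∃ y ∈ Set.Ioc x (x+1), f y ^ 2 ≤ 2 := by
    by_contra h
    push_neg at h
    have hge : (2:ENNReal) ≤ ∫⁻ z in Set.Ioc x (x+1), ENNReal.ofReal (f z ^ 2) := by
      have : ∀ z ∈ Set.Ioc x (x+1), (2:ENNReal) ≤ ENNReal.ofReal (f z ^ 2) := by
        intro z hz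
        have := (h z hz).le
        calc (2:ENNReal) = ENNReal.ofReal 2 := by norm_num
          _ ≤ _ := ENNReal.ofReal_le_ofReal this
      calc (2:ENNReal) = 2 * volume (Set.Ioc x (x+1)) := by
            rw [Real.volume_Ioc]; norm_num
        _ = ∫⁻ _z in Set.Ioc x (x+1), (2:ENNReal) := (setLIntegral_const _ _).symm
        _ ≤ _ := setLIntegral_mono (hmeas.pow_const 2).ennreal_ofReal this
    have hle : (∫⁻ z in Set.Ioc x (x+1), ENNReal.ofReal (f z ^ 2)) ≤ 1 :=
      (setLIntegral_le_lintegral _ _).trans hL2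
    have : (2:ENNReal) ≤ 1 := hge.trans hle
    norm_num at this
  have h1 : |f y| ≤ Real.sqrt 2 := by
    rw [← Real.sqrt_sq_eq_abs]
    exact Real.sqrt_le_sqrt hy2
  have h2 : |f x - f y| ≤ Real.sqrt (max M 0) * Real.sqrt |y - x| := by
    have := holder_bound f hf hk y x
    rwa [abs_sub_comm (x:ℝ) y] at this
  have h3 : Real.sqrt |y - x| ≤ 1 := by
    rw [show (1:ℝ) = Real.sqrt 1 by simp]
    apply Real.sqrt_le_sqrt
    rw [abs_of_pos (sub_pos.2 hy.1)]
    linarith [hy.2]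
  calc |f x| ≤ |f y| + |f x - f y| := by
        have := abs_sub_abs_le_abs_sub (f x) (f y); linarith [abs_sub (f x) (f y)]
    _ ≤ Real.sqrt 2 + Real.sqrt (max M 0) * Real.sqrt |y - x| := add_le_add h1 h2
    _ ≤ Real.sqrt 2 + Real.sqrt (max M 0) := by
        nlinarith [Real.sqrt_nonneg (max M 0), Real.sqrt_nonneg |y - x|]

lemma prod_lower {R : ℝ} (hR : 0 < R) (f : ℝ → ℝ) (hm : Measurable f)
    (s : Set ℝ) (hs : MeasurableSet s) (habs : ∀ x ∈ s, R ≤ |x|)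
    (hsign : ∀ x ∈ s, ∀ y ∈ s, 0 < x * y) :
    ENNReal.ofReal R * (∫⁻ x in s, ENNReal.ofReal (f x ^ 2)) *
      (∫⁻ x in s, ENNReal.ofReal (f x ^ 2)) ≤ Clint (fun x => f x ^ 2) := by
  have hm2 : Measurable fun x => ENNReal.ofReal (f x ^ 2) :=
    (hm.pow_const 2).ennreal_ofReal
  have hsub : s ×ˢ s ⊆ {p : ℝ × ℝ | 0 < p.1 * p.2} := fun p hp =>
    hsign p.1 hp.1 p.2 hp.2
  have step1 : (∫⁻ p in s ×ˢ s,
      ENNReal.ofReal (min (|p.1|) (|p.2|) * f p.1 ^ 2 * f p.2 ^ 2)) ≤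
      Clint (fun x => f x ^ 2) :=
    lintegral_mono_set hsub
  have step2 : (∫⁻ p in s ×ˢ s,
      ENNReal.ofReal R * ENNReal.ofReal (f p.1 ^ 2) * ENNReal.ofReal (f p.2 ^ 2)) ≤
      ∫⁻ p in s ×ˢ s, ENNReal.ofReal (min (|p.1|) (|p.2|) * f p.1 ^ 2 * f p.2 ^ 2) := by
    apply setLIntegral_mono
    · apply Measurable.ennreal_ofReal
      exact (((measurable_fst.abs.min measurable_snd.abs)).mul
        ((hm.comp measurable_fst).pow_const 2)).mul ((hm.comp measurable_snd).pow_const 2)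
    · rintro ⟨x, y⟩ ⟨hx, hy⟩
      dsimp only
      rw [← ENNReal.ofReal_mul hR.le, ← ENNReal.ofReal_mul (by positivity)]
      apply ENNReal.ofReal_le_ofReal
      have hmin : R ≤ min |x| |y| := le_min (habs x hx) (habs y hy)
      exact mul_le_mul_of_nonneg_right
        (mul_le_mul_of_nonneg_right hmin (sq_nonneg _)) (sq_nonneg _)
  have step3 : (∫⁻ p in s ×ˢ s,
      ENNReal.ofReal R * ENNReal.ofReal (f p.1 ^ 2) * ENNReal.ofReal (f p.2 ^ 2)) =
      ENNReal.ofReal R * (∫⁻ x in s, ENNReal.ofReal (f x ^ 2)) *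
        (∫⁻ x in s, ENNReal.ofReal (f x ^ 2)) := by
    have : (volume : Measure (ℝ × ℝ)).restrict (s ×ˢ s) =
        ((volume : Measure ℝ).restrict s).prod ((volume : Measure ℝ).restrict s) := by
      rw [Measure.volume_eq_prod, Measure.prod_restrict]
    rw [this]
    calc (∫⁻ p, ENNReal.ofReal R * ENNReal.ofReal (f p.1 ^ 2) * ENNReal.ofReal (f p.2 ^ 2)
          ∂((volume : Measure ℝ).restrict s).prod ((volume : Measure ℝ).restrict s))
        = ENNReal.ofReal R * ∫⁻ p, ENNReal.ofReal (f p.1 ^ 2) * ENNReal.ofReal (f p.2 ^ 2)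
          ∂((volume : Measure ℝ).restrict s).prod ((volume : Measure ℝ).restrict s) := by
          rw [← lintegral_const_mul]
          · simp only [mul_assoc]
          · exact (hm2.comp measurable_fst).mul (hm2.comp measurable_snd)
      _ = _ := by
          rw [lintegral_prod_mul (hm2.aemeasurable) (hm2.aemeasurable), mul_assoc]
  calc ENNReal.ofReal R * (∫⁻ x in s, ENNReal.ofReal (f x ^ 2)) *
        (∫⁻ x in s, ENNReal.ofReal (f x ^ 2)) = _ := step3.symm
    _ ≤ _ := step2
    _ ≤ _ := step1

lemma tail_bound {M : ℝ} (f : ℝ → ℝ) (hm : Measurable f)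
    (hC : Clint (fun x => f x ^ 2) ≤ ENNReal.ofReal M)
    {e : ℝ} (he : 0 < e) {R : ℝ} (hR1 : 1 ≤ R) (hR2 : max M 0 / e ^ 2 < R) :
    (∫⁻ x in (Set.Icc (-R) R)ᶜ, ENNReal.ofReal (f x ^ 2)) ≤ ENNReal.ofReal (2 * e) := by
  have hR : 0 < R := lt_of_lt_of_le zero_lt_one hR1
  have key : ∀ s : Set ℝ, MeasurableSet s → (∀ x ∈ s, R ≤ |x|) →
      (∀ x ∈ s, ∀ y ∈ s, 0 < x * y) →
      (∫⁻ x in s, ENNReal.ofReal (f x ^ 2)) ≤ ENNReal.ofReal e := by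
    intro s hs habs hsign
    by_contra h
    push_neg at h
    have hA : ENNReal.ofReal e ≤ ∫⁻ x in s, ENNReal.ofReal (f x ^ 2) := h.le
    have := prod_lower hR f hm s hs habs hsign
    have hbig : ENNReal.ofReal (R * e * e) ≤ ENNReal.ofReal (max M 0) := by
      calc ENNReal.ofReal (R * e * e)
          = ENNReal.ofReal R * ENNReal.ofReal e * ENNReal.ofReal e := by
            rw [ENNReal.ofReal_mul (by positivity), ENNReal.ofReal_mul hR.le]
        _ ≤ ENNReal.ofReal R * (∫⁻ x in s, ENNReal.ofReal (f x ^ 2)) *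
            (∫⁻ x in s, ENNReal.ofReal (f x ^ 2)) := by
            exact mul_le_mul' (mul_le_mul' le_rfl hA) hA
        _ ≤ Clint (fun x => f x ^ 2) := this
        _ ≤ ENNReal.ofReal M := hC
        _ ≤ ENNReal.ofReal (max M 0) := ENNReal.ofReal_le_ofReal (le_max_left _ _)
    rw [ENNReal.ofReal_le_ofReal_iff (le_max_right M 0)] at hbig
    have : max M 0 / e ^ 2 < R := hR2
    have he2 : (0:ℝ) < e ^ 2 := by positivity
    rw [div_lt_iff₀ he2] at this
    nlinarith
  have hsub : (Set.Icc (-R) R)ᶜ ⊆ Set.Iic (-R) ∪ Set.Ici R := by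
    intro x hx
    simp only [Set.mem_compl_iff, Set.mem_Icc, not_and_or, not_le] at hx
    rcases hx with h | h
    · exact Or.inl (le_of_lt h)
    · exact Or.inr (le_of_lt h)
  calc (∫⁻ x in (Set.Icc (-R) R)ᶜ, ENNReal.ofReal (f x ^ 2))
      ≤ ∫⁻ x in Set.Iic (-R) ∪ Set.Ici R, ENNReal.ofReal (f x ^ 2) :=
        lintegral_mono_set hsub
    _ ≤ (∫⁻ x in Set.Iic (-R), ENNReal.ofReal (f x ^ 2)) +
        ∫⁻ x in Set.Ici R, ENNReal.ofReal (f x ^ 2) := lintegral_union_le _ _ _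
    _ ≤ ENNReal.ofReal e + ENNReal.ofReal e := by
        apply add_le_add
        · apply key _ measurableSet_Iic
          · intro x hx
            rw [Set.mem_Iic] at hx
            rw [abs_of_nonpos (by linarith)]; linarith
          · intro x hx y hy
            rw [Set.mem_Iic] at hx hy
            have hx0 : x < 0 := by linarith
            have hy0 : y < 0 := by linarith
            exact mul_pos_of_neg_of_neg hx0 hy0
        · apply key _ measurableSet_Ici
          · intro x hx
            rw [Set.mem_Ici] at hx
            rw [abs_of_nonneg (by linarith)]; exact hx
          · intro x hx y hy
            rw [Set.mem_Ici] at hx hy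
            exact mul_pos (lt_of_lt_of_le hR hx) (lt_of_lt_of_le hR hy)
    _ = ENNReal.ofReal (2 * e) := by
        rw [← ENNReal.ofReal_add he.le he.le]; ring_nf

lemma extract_subseq {K : ℝ} (F : ℕ → ℝ → ℝ) (hb : ∀ m x, |F m x| ≤ K) :
    ∃ φ : ℕ → ℕ, StrictMono φ ∧ ∃ g : ℚ → ℝ,
      ∀ q : ℚ, Tendsto (fun k => F (φ k) (q : ℝ)) atTop (nhds (g q)) := by
  have hcpt : IsCompact (Set.univ.pi fun _ : ℚ => Set.Icc (-K) K) :=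
    isCompact_univ_pi fun _ => isCompact_Icc
  have hseq : IsSeqCompact (Set.univ.pi fun _ : ℚ => Set.Icc (-K) K) :=
    hcpt.isSeqCompact
  set G : ℕ → ℚ → ℝ := fun m q => F m (q : ℝ) with hG
  have hmem : ∀ m, G m ∈ Set.univ.pi fun _ : ℚ => Set.Icc (-K) K := by
    intro m
    rw [Set.mem_univ_pi]
    intro q
    exact abs_le.1 (hb m q)
  obtain ⟨g, _, φ, hφ, hconv⟩ := hseq hmem
  exact ⟨φ, hφ, g, fun q => tendsto_pi_nhds.1 hconv q⟩

lemma cauchy_everywhere {C : ℝ} (hC0 : 0 ≤ C) (w : ℕ → ℝ → ℝ) (g : ℚ → ℝ)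
    (hhol : ∀ k a b, |w k b - w k a| ≤ C * Real.sqrt |b - a|)
    (hq : ∀ q : ℚ, Tendsto (fun k => w k (q : ℝ)) atTop (nhds (g q)))
    (x : ℝ) : CauchySeq (fun k => w k x) := by
  rw [Metric.cauchySeq_iff]
  intro ε hε
  set δ : ℝ := (ε / (3 * (C + 1))) ^ 2 with hδ
  have hδ0 : 0 < δ := by positivity
  obtain ⟨q, hqx⟩ := exists_rat_near x hδ0
  have hnear : ∀ k, |w k x - w k (q : ℝ)| < ε / 3 := by
    intro k
    calc |w k x - w k (q : ℝ)| ≤ C * Real.sqrt |x - (q : ℝ)| := hhol k _ _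
      _ ≤ C * Real.sqrt δ := by
          apply mul_le_mul_of_nonneg_left (Real.sqrt_le_sqrt hqx.le) hC0
      _ = C * (ε / (3 * (C + 1))) := by
          rw [hδ, Real.sqrt_sq (by positivity)]
      _ < ε / 3 := by
          rw [mul_div_assoc', div_lt_div_iff₀ (by positivity) (by norm_num)]
          nlinarith
  have hcq : CauchySeq (fun k => w k (q : ℝ)) := (hq q).cauchySeq
  rw [Metric.cauchySeq_iff] at hcq
  obtain ⟨N, hN⟩ := hcq (ε / 3) (by positivity)
  refine ⟨N, fun m hm n hn => ?_⟩
  have h1 := hnear m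
  have h2 := hnear n
  have h3 := hN m hm n hn
  rw [Real.dist_eq] at h3 ⊢
  calc |w m x - w n x| ≤ |w m x - w m (q:ℝ)| + |w m (q:ℝ) - w n (q:ℝ)| + |w n (q:ℝ) - w n x| := by
        have := abs_sub_le (w m x) (w m (q:ℝ)) (w n x)
        have := abs_sub_le (w m (q:ℝ)) (w n (q:ℝ)) (w n x)
        linarith
    _ < ε / 3 + ε / 3 + ε / 3 := by
        rw [abs_sub_comm (w n x)] at h2
        exact add_lt_add (add_lt_add h1 h3) h2
    _ = ε := by ring

theorem stmt_8 (M : ℝ) (u : ℕ → ℝ → ℝ) (hdiff : ∀ m, Differentiable ℝ (u m))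
    (hL2 : ∀ m, (∫⁻ x : ℝ, ENNReal.ofReal (u m x ^ 2)) ≤ 1)
    (hkin : ∀ m, (∫⁻ x : ℝ, ENNReal.ofReal (deriv (u m) x ^ 2)) ≤ ENNReal.ofReal M)
    (hC : ∀ m, Clint (fun x => u m x ^ 2) ≤ ENNReal.ofReal M) :
    ∃ φ : ℕ → ℕ, StrictMono φ ∧ ∃ v : ℝ → ℝ, MemLp v 2 (volume : Measure ℝ) ∧
      Tendsto (fun k => eLpNorm (u (φ k) - v) 2 (volume : Measure ℝ)) atTop (nhds 0) := by
  classical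
  set M' := max M 0 with hM'def
  have hM'0 : (0:ℝ) ≤ M' := le_max_right M 0
  have hcont : ∀ m, Continuous (u m) := fun m => (hdiff m).continuous
  have hmeas : ∀ m, Measurable (u m) := fun m => (hcont m).measurable
  set C0 := Real.sqrt M' with hC0def
  have hC00 : (0:ℝ) ≤ C0 := Real.sqrt_nonneg _
  have hhol : ∀ m a b, |u m b - u m a| ≤ C0 * Real.sqrt |b - a| :=
    fun m a b => holder_bound (u m) (hdiff m) (hkin m) a b
  set K := Real.sqrt 2 + C0 with hKdef
  have hKb : ∀ m x, |u m x| ≤ K :=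
    fun m x => sup_bound (u m) (hdiff m) (hL2 m) (hkin m) x
  obtain ⟨φ, hφ, g, hg⟩ := extract_subseq u hKb
  have hcau : ∀ x, CauchySeq (fun k => u (φ k) x) :=
    cauchy_everywhere hC00 (fun k => u (φ k)) g (fun k a b => hhol (φ k) a b) hg
  have hlim : ∀ x, ∃ l, Tendsto (fun k => u (φ k) x) atTop (nhds l) :=
    fun x => cauchySeq_tendsto_of_complete (hcau x)
  choose v hv using hlim
  have hvmeas : Measurable v := by
    apply measurable_of_tendsto_metrizable' atTop (fun k => hmeas (φ k))
    rw [tendsto_pi_nhds]; exact hv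
  have hvK : ∀ x, |v x| ≤ K := fun x =>
    le_of_tendsto ((continuous_abs.tendsto _).comp (hv x))
      (Filter.Eventually.of_forall fun k => hKb _ x)
  have humeas2 : ∀ k, Measurable fun x => ENNReal.ofReal (u (φ k) x ^ 2) :=
    fun k => ((hmeas (φ k)).pow_const 2).ennreal_ofReal
  have hvmeas2 : Measurable fun x => ENNReal.ofReal (v x ^ 2) :=
    (hvmeas.pow_const 2).ennreal_ofReal
  have hsqtend : ∀ x, Tendsto (fun k => ENNReal.ofReal (u (φ k) x ^ 2)) atTop
      (nhds (ENNReal.ofReal (v x ^ 2))) := fun x =>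
    (ENNReal.continuous_ofReal.tendsto _).comp (((continuous_pow 2).tendsto _).comp (hv x))
  have hfatou : ∀ (s : Set ℝ) (c : ℝ≥0∞),
      (∀ k, (∫⁻ x in s, ENNReal.ofReal (u (φ k) x ^ 2)) ≤ c) →
      (∫⁻ x in s, ENNReal.ofReal (v x ^ 2)) ≤ c := by
    intro s c hc
    have heq : ∀ x, ENNReal.ofReal (v x ^ 2) =
        liminf (fun k => ENNReal.ofReal (u (φ k) x ^ 2)) atTop :=
      fun x => ((hsqtend x).liminf_eq).symm
    calc (∫⁻ x in s, ENNReal.ofReal (v x ^ 2))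
        = ∫⁻ x in s, liminf (fun k => ENNReal.ofReal (u (φ k) x ^ 2)) atTop := by
          apply lintegral_congr; intro x; exact heq x
      _ ≤ liminf (fun k => ∫⁻ x in s, ENNReal.ofReal (u (φ k) x ^ 2)) atTop :=
          lintegral_liminf_le humeas2
      _ ≤ c := liminf_le_of_frequently_le' (Frequently.of_forall hc)
  have hvL2 : (∫⁻ x, ENNReal.ofReal (v x ^ 2)) ≤ 1 := by
    have := hfatou Set.univ 1 (fun k => by
      rw [Measure.restrict_univ]; exact hL2 (φ k))
    rwa [Measure.restrict_univ] at this
  have hmem : MemLp v 2 (volume : Measure ℝ) := by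
    refine ⟨hvmeas.aestronglyMeasurable, ?_⟩
    rw [eLpNorm_eq_lintegral_rpow_enorm_toReal (by norm_num) (by norm_num)]
    simp only [ENNReal.toReal_ofNat]
    have hbase : (∫⁻ x, (‖v x‖₊ : ℝ≥0∞) ^ (2:ℝ)) ≤ 1 := by
      calc (∫⁻ x, (‖v x‖₊ : ℝ≥0∞) ^ (2:ℝ))
          = ∫⁻ x, ENNReal.ofReal (v x ^ 2) := by
            apply lintegral_congr; intro x; exact nnnorm_sq_ofReal (v x)
        _ ≤ 1 := hvL2
    exact ENNReal.rpow_lt_top_of_nonneg (by norm_num)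
      (lt_of_le_of_lt hbase ENNReal.one_lt_top).ne
  -- the key quantity
  set T : ℕ → ℝ≥0∞ := fun k => ∫⁻ x, ENNReal.ofReal ((u (φ k) x - v x) ^ 2) with hTdef
  have hdmeas : ∀ k, Measurable fun x => ENNReal.ofReal ((u (φ k) x - v x) ^ 2) :=
    fun k => (((hmeas (φ k)).sub hvmeas).pow_const 2).ennreal_ofReal
  have hT0 : Tendsto T atTop (nhds 0) := by
    rw [ENNReal.tendsto_nhds_zero]
    intro ε hε
    set ε' : ℝ≥0∞ := min ε 1 with hε'def
    have hε'0 : 0 < ε' := lt_min hε zero_lt_one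
    have hε'top : ε' ≠ ⊤ := (lt_of_le_of_lt (min_le_right _ _) ENNReal.one_lt_top).ne
    set t : ℝ := ε'.toReal with htdef
    have ht0 : 0 < t := ENNReal.toReal_pos hε'0.ne' hε'top
    set e : ℝ := t / 32 with hedef
    have he : 0 < e := by positivity
    set R : ℝ := max 1 (M' / e ^ 2 + 1) with hRdef
    have hR1 : (1:ℝ) ≤ R := le_max_left _ _
    have hR2 : M' / e ^ 2 < R := lt_of_lt_of_le (lt_add_one _) (le_max_right _ _)
    have htailu : ∀ m, (∫⁻ x in (Set.Icc (-R) R)ᶜ, ENNReal.ofReal (u m x ^ 2)) ≤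
        ENNReal.ofReal (2 * e) :=
      fun m => tail_bound (u m) (hmeas m) (hC m) he hR1 hR2
    have htailv : (∫⁻ x in (Set.Icc (-R) R)ᶜ, ENNReal.ofReal (v x ^ 2)) ≤
        ENNReal.ofReal (2 * e) := hfatou _ _ (fun k => htailu (φ k))
    have htail : ∀ k, (∫⁻ x in (Set.Icc (-R) R)ᶜ,
        ENNReal.ofReal ((u (φ k) x - v x) ^ 2)) ≤ ε' / 2 := by
      intro k
      have hpt : ∀ x, ENNReal.ofReal ((u (φ k) x - v x) ^ 2) ≤
          2 * ENNReal.ofReal (u (φ k) x ^ 2) + 2 * ENNReal.ofReal (v x ^ 2) := by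
        intro x
        calc ENNReal.ofReal ((u (φ k) x - v x) ^ 2)
            ≤ ENNReal.ofReal (2 * u (φ k) x ^ 2 + 2 * v x ^ 2) :=
              ENNReal.ofReal_le_ofReal (by nlinarith [sq_nonneg (u (φ k) x + v x)])
          _ = 2 * ENNReal.ofReal (u (φ k) x ^ 2) + 2 * ENNReal.ofReal (v x ^ 2) := by
              rw [ENNReal.ofReal_add (by positivity) (by positivity),
                ENNReal.ofReal_mul (by norm_num), ENNReal.ofReal_mul (by norm_num),
                ENNReal.ofReal_ofNat]
      calc (∫⁻ x in (Set.Icc (-R) R)ᶜ, ENNReal.ofReal ((u (φ k) x - v x) ^ 2))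
          ≤ ∫⁻ x in (Set.Icc (-R) R)ᶜ,
              (2 * ENNReal.ofReal (u (φ k) x ^ 2) + 2 * ENNReal.ofReal (v x ^ 2)) :=
            setLIntegral_mono (((humeas2 k).const_mul 2).add (hvmeas2.const_mul 2))
              (fun x _ => hpt x)
        _ = 2 * (∫⁻ x in (Set.Icc (-R) R)ᶜ, ENNReal.ofReal (u (φ k) x ^ 2)) +
            2 * (∫⁻ x in (Set.Icc (-R) R)ᶜ, ENNReal.ofReal (v x ^ 2)) := by
            rw [lintegral_add_left ((humeas2 k).const_mul 2),
              lintegral_const_mul 2 (humeas2 k), lintegral_const_mul 2 hvmeas2]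
        _ ≤ 2 * ENNReal.ofReal (2 * e) + 2 * ENNReal.ofReal (2 * e) :=
            add_le_add (mul_le_mul' le_rfl (htailu (φ k))) (mul_le_mul' le_rfl htailv)
        _ = ENNReal.ofReal (8 * e) := by
            rw [show (2:ℝ≥0∞) = ENNReal.ofReal 2 by simp,
              ← ENNReal.ofReal_mul (by norm_num),
              ← ENNReal.ofReal_add (by positivity) (by positivity)]
            ring_nf
        _ ≤ ε' / 2 := by
            have h1 : (8:ℝ) * e = t / 4 := by rw [hedef]; ring
            have h2 : ENNReal.ofReal (t / 4) ≤ ENNReal.ofReal (t / 2) :=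
              ENNReal.ofReal_le_ofReal (by linarith)
            have h3 : ENNReal.ofReal (t / 2) = ε' / 2 := by
              rw [ENNReal.ofReal_div_of_pos (by norm_num), ENNReal.ofReal_ofNat,
                htdef, ENNReal.ofReal_toReal hε'top]
            rw [h1]; exact h2.trans_eq h3
    have hcomp : Tendsto (fun k => ∫⁻ x in Set.Icc (-R) R,
        ENNReal.ofReal ((u (φ k) x - v x) ^ 2)) atTop (nhds 0) := by
      have hbound : ∀ k, (fun x => ENNReal.ofReal ((u (φ k) x - v x) ^ 2)) ≤ᵐ[
          volume.restrict (Set.Icc (-R) R)] fun _ => ENNReal.ofReal ((2 * K) ^ 2) := by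
        intro k
        apply Filter.Eventually.of_forall
        intro x
        apply ENNReal.ofReal_le_ofReal
        have habs : |u (φ k) x - v x| ≤ 2 * K := by
          calc |u (φ k) x - v x| ≤ |u (φ k) x| + |v x| := abs_sub _ _
            _ ≤ K + K := add_le_add (hKb _ x) (hvK x)
            _ = 2 * K := by ring
        calc (u (φ k) x - v x) ^ 2 = |u (φ k) x - v x| ^ 2 := (sq_abs _).symm
          _ ≤ (2 * K) ^ 2 := pow_le_pow_left₀ (abs_nonneg _) habs 2
      have hfin : (∫⁻ _x in Set.Icc (-R) R, ENNReal.ofReal ((2 * K) ^ 2)) ≠ ⊤ := by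
        rw [setLIntegral_const]
        exact ENNReal.mul_ne_top ENNReal.ofReal_ne_top
          (by rw [Real.volume_Icc]; exact ENNReal.ofReal_ne_top)
      have hconv : ∀ᵐ x ∂(volume.restrict (Set.Icc (-R) R)),
          Tendsto (fun k => ENNReal.ofReal ((u (φ k) x - v x) ^ 2)) atTop (nhds 0) := by
        apply Filter.Eventually.of_forall
        intro x
        have h1 : Tendsto (fun k => u (φ k) x - v x) atTop (nhds 0) := by
          have := (hv x).sub (tendsto_const_nhds (x := v x))
          simpa using this
        have h2 : Tendsto (fun k => ENNReal.ofReal ((u (φ k) x - v x) ^ 2)) atTop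
            (nhds (ENNReal.ofReal ((0:ℝ) ^ 2))) :=
          (ENNReal.continuous_ofReal.tendsto _).comp
            (((continuous_pow 2).tendsto _).comp h1)
        simpa using h2
      have := tendsto_lintegral_of_dominated_convergence
        (μ := volume.restrict (Set.Icc (-R) R))
        (F := fun k x => ENNReal.ofReal ((u (φ k) x - v x) ^ 2))
        (f := fun _ => 0) _ (fun k => hdmeas k) hbound hfin hconv
      simpa using this
    have hcompev : ∀ᶠ k in atTop, (∫⁻ x in Set.Icc (-R) R,
        ENNReal.ofReal ((u (φ k) x - v x) ^ 2)) ≤ ε' / 2 :=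
      (ENNReal.tendsto_nhds_zero.mp hcomp) (ε' / 2)
        (ENNReal.div_pos hε'0.ne' (by norm_num))
    filter_upwards [hcompev] with k hk
    calc T k = (∫⁻ x in Set.Icc (-R) R, ENNReal.ofReal ((u (φ k) x - v x) ^ 2)) +
        ∫⁻ x in (Set.Icc (-R) R)ᶜ, ENNReal.ofReal ((u (φ k) x - v x) ^ 2) :=
          (lintegral_add_compl _ measurableSet_Icc).symm
      _ ≤ ε' / 2 + ε' / 2 := add_le_add hk (htail k)
      _ = ε' := ENNReal.add_halves _
      _ ≤ ε := min_le_left _ _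
  refine ⟨φ, hφ, v, hmem, ?_⟩
  have heLp : ∀ k, eLpNorm (u (φ k) - v) 2 (volume : Measure ℝ) = (T k) ^ (1/2 : ℝ) := by
    intro k
    rw [eLpNorm_eq_lintegral_rpow_enorm_toReal (by norm_num) (by norm_num)]
    simp only [ENNReal.toReal_ofNat]
    congr 1
    apply lintegral_congr
    intro x
    rw [Pi.sub_apply, enorm_eq_nnnorm, nnnorm_sq_ofReal]
  have hfinal : Tendsto (fun k => (T k) ^ (1/2 : ℝ)) atTop (nhds ((0:ℝ≥0∞) ^ (1/2:ℝ))) :=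
    (ENNReal.continuous_rpow_const.tendsto 0).comp hT0
  rw [ENNReal.zero_rpow_of_pos (by norm_num)] at hfinal
  exact Tendsto.congr (fun k => (heLp k).symm) hfinal
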